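/- For every integer n ≥ 3, the VC dimension of the class H_n of cubic monomials on {0,1}^n is at least ⌊log₂(n - 2)⌋ + 1. -/
import Mathlib


/-- `h : {0,1}^n → {0,1}` is a cubic monomial: `h x = x_i^a ∧ x_j^b ∧ x_k^c`
for some `i < j < k` and exponents `a b c`, where the literal `x_i^a` is true
iff `x i = a`. -/
def IsCubicMonomial (n : ℕ) (h : (Fin n → Bool) → Bool) : Prop :=
  ∃ (i j k : Fin n) (a b c : Bool), i < j ∧ j < k ∧
    ∀ x, h x = ((x i == a) && (x j == b) && (x k == c))

/-- The class `H_n` of cubic monomials on `{0,1}^n`. -/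
def cubicMonomials (n : ℕ) : Set ((Fin n → Bool) → Bool) :=
  {h | IsCubicMonomial n h}

/-- A class `H` of Boolean functions shatters a finite set `S` if every
labeling of `S` is realized by some member of `H`. -/
def Shatters {α : Type*} (H : Set (α → Bool)) (S : Finset α) : Prop :=
  ∀ y : α → Bool, ∃ h ∈ H, ∀ x ∈ S, h x = y x

/-- The VC dimension of a class of Boolean functions: the largest cardinality
of a shattered subset of the domain. -/
noncomputable def VCDim {α : Type*} (H : Set (α → Bool)) : ℕ :=
  sSup {N | ∃ S : Finset α, Shatters H S ∧ S.card = N}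

/-- Binary encoding of a Boolean vector. -/
def enc : {k : ℕ} → (Fin k → Bool) → ℕ
  | 0, _ => 0
  | _ + 1, f => Nat.bit (f 0) (enc (f ∘ Fin.succ))

lemma enc_lt : ∀ {k : ℕ} (f : Fin k → Bool), enc f < 2 ^ k
  | 0, _ => by simp [enc]
  | k + 1, f => by
      have := enc_lt (f ∘ Fin.succ)
      simp only [enc, Nat.bit_val, pow_succ]
      cases f 0 <;> simp <;> omega

lemma testBit_enc : ∀ {k : ℕ} (f : Fin k → Bool) (t : ℕ) (ht : t < k),
    (enc f).testBit t = f ⟨t, ht⟩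
  | 0, _, t, ht => by omega
  | k + 1, f, 0, ht => by simp [enc, Nat.testBit_bit_zero]
  | k + 1, f, t + 1, ht => by
      have := testBit_enc (f ∘ Fin.succ) t (by omega)
      simpa [enc, Nat.testBit_bit_succ] using this

/-- For every `n ≥ 3`, the VC dimension of the class of cubic monomials on
`{0,1}^n` is at least `⌊log₂ (n - 2)⌋ + 1`. -/
theorem stmt1 (n : ℕ) (hn : 3 ≤ n) :
    Nat.log 2 (n - 2) + 1 ≤ VCDim (cubicMonomials n) := by
  set d : ℕ := Nat.log 2 (n - 2) + 1 with hd
  have hpow : 2 ^ (d - 1) ≤ n - 2 := by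
    simpa [hd] using Nat.pow_log_le_self 2 (x := n - 2) (by omega)
  -- the shattered points
  set pt : Fin d → (Fin n → Bool) :=
    fun t c => if h2 : 2 ≤ c.val then Nat.testBit (c.val - 2) t.val else true with hpt
  have hptval : ∀ (u : Fin d) (m : ℕ) (hm : 2 + m < n),
      pt u ⟨2 + m, hm⟩ = Nat.testBit m u.val := by
    intro u m hm
    simp only [hpt]
    rw [dif_pos (Nat.le_add_right 2 m)]
    congr 1
    omega
  have hinj : Function.Injective pt := by
    intro t t' h
    by_contra hne
    -- wlog t < t'
    have key : ∀ s s' : Fin d, s.val < s'.val → pt s = pt s' → False := by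
      intro s s' hlt heq
      have hs' := s'.isLt
      have hs : s.val < d - 1 := by omega
      have hcoord : 2 + 2 ^ s.val < n := by
        have : 2 ^ s.val < 2 ^ (d - 1) :=
          Nat.pow_lt_pow_right (by norm_num) hs
        omega
      have := congrFun heq ⟨2 + 2 ^ s.val, hcoord⟩
      rw [hptval s _ hcoord, hptval s' _ hcoord] at this
      rw [Nat.testBit_two_pow_self, Nat.testBit_two_pow_of_ne (by omega)] at this
      exact Bool.true_eq_false.mp this
    rcases Nat.lt_or_ge t.val t'.val with hlt | hge
    · exact key t t' hlt h
    · have : t'.val < t.val := by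
        rcases Nat.lt_or_ge t'.val t.val with h' | h'
        · exact h'
        · exact absurd (Fin.ext (by omega)) hne
      exact key t' t this h.symm
  set S : Finset (Fin n → Bool) := Finset.univ.image pt with hS
  have hcard : S.card = d := by
    rw [hS, Finset.card_image_of_injective _ hinj, Finset.card_univ, Fintype.card_fin]
  have hshat : Shatters (cubicMonomials n) S := by
    intro y
    set c : Bool := !(y (pt ⟨d - 1, by omega⟩)) with hc
    set g : Fin (d - 1) → Bool := fun s => (y (pt ⟨s.val, by omega⟩) == c) with hg
    have hm : enc g < 2 ^ (d - 1) := enc_lt g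
    have hkn : 2 + enc g < n := by omega
    refine ⟨fun x => (x ⟨0, by omega⟩ == true) && (x ⟨1, by omega⟩ == true)
        && (x ⟨2 + enc g, hkn⟩ == c), ⟨⟨0, by omega⟩, ⟨1, by omega⟩, ⟨2 + enc g, hkn⟩,
        true, true, c, by simp [Fin.lt_def], by simp only [Fin.lt_def]; omega, fun x => rfl⟩, ?_⟩
    intro x hx
    rw [hS, Finset.mem_image] at hx
    obtain ⟨t, -, rfl⟩ := hx
    have h0 : pt t ⟨0, by omega⟩ = true := by simp [hpt]
    have h1 : pt t ⟨1, by omega⟩ = true := by simp [hpt]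
    have hk : pt t ⟨2 + enc g, hkn⟩ = Nat.testBit (enc g) t.val := hptval t _ hkn
    simp only [h0, h1, hk]
    simp only [beq_self_eq_true, Bool.true_and]
    rcases Nat.lt_or_ge t.val (d - 1) with hlt | hge
    · rw [testBit_enc g t.val hlt]
      have : (⟨t.val, by omega⟩ : Fin d) = t := Fin.ext rfl
      simp only [hg, this]
      cases c <;> cases y (pt t) <;> rfl
    · have htlt := t.isLt
      have htv : t.val = d - 1 := by omega
      have ht : t = ⟨d - 1, by omega⟩ := Fin.ext htv
      rw [Nat.testBit_lt_two_pow (by rw [htv]; exact hm)]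
      rw [ht, hc]
      cases y (pt ⟨d - 1, by omega⟩) <;> rfl
  -- conclude
  have hmem : d ∈ {N | ∃ S : Finset (Fin n → Bool), Shatters (cubicMonomials n) S ∧ S.card = N} :=
    ⟨S, hshat, hcard⟩
  have hbdd : BddAbove {N | ∃ S : Finset (Fin n → Bool), Shatters (cubicMonomials n) S ∧ S.card = N} := by
    refine ⟨Fintype.card (Fin n → Bool), ?_⟩
    rintro N ⟨T, -, rfl⟩
    exact Finset.card_le_univ T
  exact le_csSup hbdd hmem
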